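/- For p = 2, a function f : ℤ_2 → ℤ_2 is compatible and induces a transitive permutation modulo 2^k for all k ≥ 1 if and only if f can be represented in the form f(x) = 1 + x + 2·(v(x+1) - v(x)), where v : ℤ_2 → ℤ_2 is some compatible (1-Lipschitz) function. -/

import Mathlib

/-- A function on the `p`-adic integers is *compatible* if it is 1-Lipschitz. -/
def IsCompatible {p : ℕ} [Fact p.Prime] (f : ℤ_[p] → ℤ_[p]) : Prop :=
  ∀ x y : ℤ_[p], ‖f x - f y‖ ≤ ‖x - y‖

/-- `f` is transitive modulo `p^k`: it induces a single-cycle permutation of `ZMod (p^k)`. -/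
def TransitiveMod {p : ℕ} [Fact p.Prime] (f : ℤ_[p] → ℤ_[p]) (k : ℕ) : Prop :=
  ∃ g : ZMod (p ^ k) → ZMod (p ^ k),
    (∀ x : ℤ_[p], g (PadicInt.toZModPow k x) = PadicInt.toZModPow k (f x)) ∧
    ∀ a b : ZMod (p ^ k), ∃ m : ℕ, g^[m] a = b

set_option linter.unusedSectionVars false
set_option linter.unnecessarySeqFocus false
set_option maxHeartbeats 1000000

namespace S4

noncomputable abbrev ψ (k : ℕ) : ℤ_[2] →+* ZMod (2^k) := PadicInt.toZModPow k

lemma norm_le_iff_dvd {k : ℕ} (x : ℤ_[2]) : ‖x‖ ≤ (2:ℝ)^(-(k:ℤ)) ↔ (2^k : ℤ_[2]) ∣ x := by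
  have := PadicInt.norm_le_pow_iff_mem_span_pow x k
  rw [Ideal.mem_span_singleton] at this
  rw [show ((2:ℕ):ℝ) = (2:ℝ) by norm_num, show (((2:ℕ)):ℤ_[2]) = (2:ℤ_[2]) by norm_num] at this
  exact this

lemma psi_eq_iff {k : ℕ} {x y : ℤ_[2]} : ψ k x = ψ k y ↔ (2^k : ℤ_[2]) ∣ x - y := by
  rw [← sub_eq_zero, ← map_sub, ← RingHom.mem_ker, PadicInt.ker_toZModPow,
    Ideal.mem_span_singleton]
  norm_num

lemma psi_natCast {k : ℕ} (n : ℕ) : ψ k (n : ℤ_[2]) = (n : ZMod (2^k)) := map_natCast _ n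

lemma psi_lift {k : ℕ} (a : ZMod (2^k)) : ψ k ((a.val : ℕ) : ℤ_[2]) = a := by
  rw [psi_natCast, ZMod.natCast_zmod_val]

lemma dvd_lift {k : ℕ} (x : ℤ_[2]) : (2^k : ℤ_[2]) ∣ x - ((ψ k x).val : ℤ_[2]) := by
  rw [← psi_eq_iff, psi_lift]

lemma compat_dvd {f : ℤ_[2] → ℤ_[2]} (hf : IsCompatible f) {k : ℕ} {x y : ℤ_[2]}
    (h : (2^k : ℤ_[2]) ∣ x - y) : (2^k : ℤ_[2]) ∣ f x - f y := by
  rw [← norm_le_iff_dvd] at h ⊢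
  exact le_trans (hf x y) h

lemma compat_of_dvd {f : ℤ_[2] → ℤ_[2]}
    (h : ∀ (k : ℕ) (x y : ℤ_[2]), (2^k : ℤ_[2]) ∣ x - y → (2^k : ℤ_[2]) ∣ f x - f y) :
    IsCompatible f := by
  intro x y
  rcases eq_or_ne x y with rfl | hxy
  · simp
  have hx : x - y ≠ 0 := sub_ne_zero.mpr hxy
  set k : ℕ := (x - y).valuation with hk
  have hval : (((x - y).valuation : ℕ) : ℤ) = (k : ℤ) := by
    rfl
  have hnorm : ‖x - y‖ = (2:ℝ) ^ (-(k:ℤ)) := by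
    rw [PadicInt.norm_eq_zpow_neg_valuation hx, hval]; norm_num
  have hdvd : (2^k : ℤ_[2]) ∣ x - y := by
    rw [← norm_le_iff_dvd, hnorm]
  have := h k x y hdvd
  rw [← norm_le_iff_dvd] at this
  rw [hnorm]; exact this

-- if divisible by all powers, equal
lemma eq_of_forall_dvd {x y : ℤ_[2]} (h : ∀ k : ℕ, (2^k : ℤ_[2]) ∣ x - y) : x = y := by
  rw [← sub_eq_zero, ← norm_eq_zero]
  by_contra hne
  have hpos : 0 < ‖x - y‖ := lt_of_le_of_ne (norm_nonneg _) (Ne.symm hne)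
  obtain ⟨k, hkl⟩ := exists_pow_lt_of_lt_one hpos (by norm_num : (1:ℝ)/2 < 1)
  have := (norm_le_iff_dvd (x - y)).2 (h k)
  rw [zpow_neg, zpow_natCast] at this
  have : ‖x - y‖ ≤ (1/2:ℝ)^k := by rw [one_div, inv_pow] at *; exact this
  linarith [hkl]


variable {α : Type*} [Fintype α] [DecidableEq α]

lemma seq_shift (g : α → α) (a : α) {i j : ℕ} (heq : g^[i] a = g^[j] a) :
    ∀ t, g^[i + t] a = g^[j + t] a := by
  intro t
  induction t with
  | zero => simpa using heq
  | succ t ih =>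
      rw [show i + (t+1) = (i + t) + 1 by ring, show j + (t+1) = (j + t) + 1 by ring,
        Function.iterate_succ_apply', Function.iterate_succ_apply', ih]

lemma orbit_reduce (g : α → α) (a : α) {i j : ℕ} (hij : i < j) (heq : g^[i] a = g^[j] a) :
    ∀ m, ∃ m' < j, g^[m'] a = g^[m] a := by
  intro m
  induction m using Nat.strong_induction_on with
  | _ m ih =>
    rcases lt_or_ge m j with h | h
    · exact ⟨m, h, rfl⟩
    · have h1 : g^[m - (j - i)] a = g^[m] a := by
        have := seq_shift g a heq (m - j)
        rw [show i + (m - j) = m - (j - i) by omega, show j + (m - j) = m by omega] at this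
        exact this
      obtain ⟨m', hm', hm''⟩ := ih (m - (j - i)) (by omega)
      exact ⟨m', hm', by rw [hm'', h1]⟩

lemma orbit_reduce_card (g : α → α) (a : α) (hsurj : ∀ b, ∃ m, g^[m] a = b) :
    ∀ m, ∃ m' < Fintype.card α, g^[m'] a = g^[m] a := by
  set N := Fintype.card α with hN
  have hdup : ∃ i j : Fin (N+1), i ≠ j ∧ g^[(i:ℕ)] a = g^[(j:ℕ)] a := by
    have h := Fintype.exists_ne_map_eq_of_card_lt (fun i : Fin (N+1) => g^[(i:ℕ)] a)
      (by simp [hN])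
    obtain ⟨i, j, hij, he⟩ := h
    exact ⟨i, j, hij, he⟩
  obtain ⟨i, j, hij, he⟩ := hdup
  rcases lt_or_gt_of_ne hij with h | h
  · intro m
    obtain ⟨m', hm', he'⟩ := orbit_reduce g a (show (i:ℕ) < (j:ℕ) from h) he m
    exact ⟨m', by omega, he'⟩
  · intro m
    obtain ⟨m', hm', he'⟩ := orbit_reduce g a (show (j:ℕ) < (i:ℕ) from h) he.symm m
    exact ⟨m', by omega, he'⟩

lemma orbit_bij (g : α → α) (a : α) (hsurj : ∀ b, ∃ m, g^[m] a = b) :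
    Function.Bijective (fun j : Fin (Fintype.card α) => g^[(j:ℕ)] a) := by
  rw [Fintype.bijective_iff_surjective_and_card]
  refine ⟨?_, by simp⟩
  intro b
  obtain ⟨m, hm⟩ := hsurj b
  obtain ⟨m', hm', he⟩ := orbit_reduce_card g a hsurj m
  exact ⟨⟨m', hm'⟩, by simpa [he] using hm⟩

lemma iterate_period (g : α → α) (a : α) {d : ℕ} (hd : 0 < d) (hp : g^[d] a = a) (m : ℕ) :
    g^[m] a = g^[m % d] a := by
  conv_lhs => rw [← Nat.div_add_mod m d]
  rw [add_comm, Function.iterate_add_apply]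
  congr 1
  induction (m / d) with
  | zero => simp
  | succ q ih => rw [Nat.mul_succ, Function.iterate_add_apply, hp, ih]

lemma orbit_closes (g : α → α) (a : α) (hsurj : ∀ b, ∃ m, g^[m] a = b)
    (hginj : Function.Injective g) : g^[Fintype.card α] a = a := by
  set N := Fintype.card α with hN
  have : Nonempty α := ⟨a⟩
  have hNpos : 0 < N := Fintype.card_pos
  obtain ⟨m', hm', he⟩ := orbit_reduce_card g a hsurj N
  -- g^[m'] a = g^[N] a with m' < N ; cancel m'
  have hcancel : g^[N - m'] a = a := by
    have h1 : g^[m'] (g^[N - m'] a) = g^[m'] a := by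
      rw [← Function.iterate_add_apply, show m' + (N - m') = N by omega]
      exact he.symm
    exact Function.Injective.iterate hginj m' h1
  set d := N - m' with hd
  have hdpos : 0 < d := by omega
  -- surjectivity forces d ≥ N
  have hdN : N ≤ d := by
    have hsur2 : Function.Surjective (fun r : Fin d => g^[(r:ℕ)] a) := by
      intro b
      obtain ⟨m, hm⟩ := hsurj b
      refine ⟨⟨m % d, Nat.mod_lt _ hdpos⟩, ?_⟩
      simpa using (iterate_period g a hdpos hcancel m).symm.trans hm
    have := Fintype.card_le_of_surjective _ hsur2
    simpa using this
  have : d = N := by omega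
  rw [← this]; exact hcancel


lemma zmod2_cases (c : ZMod 2) : c = 0 ∨ c = 1 := by revert c; decide

lemma odd_succ {u : ℤ_[2]} (hu : ¬ (2:ℤ_[2]) ∣ u) : (2:ℤ_[2]) ∣ u + 1 := by
  rcases zmod2_cases (ψ 1 u) with h | h
  · exfalso
    apply hu
    have : ψ 1 u = ψ 1 0 := by simpa using h
    simpa using psi_eq_iff.mp this
  · have : ψ 1 u = ψ 1 1 := by simpa using h
    have h2 : (2:ℤ_[2]) ∣ u - 1 := by simpa using psi_eq_iff.mp this
    have : u + 1 = (u - 1) + 2 := by ring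
    rw [this]
    exact dvd_add h2 ⟨1, by ring⟩

section Backward
variable (v : ℤ_[2] → ℤ_[2])

/-- The difference function. -/
noncomputable def Δ (x : ℤ_[2]) : ℤ_[2] := v (x + 1) - v x

variable {f : ℤ_[2] → ℤ_[2]} (hv : IsCompatible v)
  (hf : ∀ x : ℤ_[2], f x = 1 + x + 2 * (v (x + 1) - v x))

include hv hf

omit hf in
lemma delta_dvd {k : ℕ} {x y : ℤ_[2]} (h : (2^k : ℤ_[2]) ∣ x - y) :
    (2^k : ℤ_[2]) ∣ Δ v x - Δ v y := by
  have h1 : (2^k : ℤ_[2]) ∣ (x+1) - (y+1) := by simpa using h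
  have h2 := compat_dvd hv h1
  have h3 := compat_dvd hv h
  have : Δ v x - Δ v y = (v (x+1) - v (y+1)) - (v x - v y) := by unfold Δ; ring
  rw [this]
  exact dvd_sub h2 h3

lemma f_compat : IsCompatible f := by
  apply compat_of_dvd
  intro k x y h
  have h1 : f x - f y = (x - y) + 2 * (Δ v x - Δ v y) := by
    rw [hf x, hf y]; unfold Δ; ring
  rw [h1]
  exact dvd_add h (Dvd.dvd.mul_left (delta_dvd v hv h) 2)

lemma telescope (m : ℕ) (x : ℤ_[2]) :
    f^[m] x = x + (m : ℤ_[2]) + 2 * ∑ j ∈ Finset.range m, Δ v (f^[j] x) := by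
  induction m with
  | zero => simp
  | succ m ih =>
      calc f^[m+1] x = f (f^[m] x) := Function.iterate_succ_apply' f m x
        _ = 1 + f^[m] x + 2 * Δ v (f^[m] x) := by rw [hf (f^[m] x)]; unfold Δ; ring
        _ = x + ((m:ℤ_[2]) + 1) + 2 * ∑ j ∈ Finset.range (m+1), Δ v (f^[j] x) := by
            rw [Finset.sum_range_succ, ih]; ring
        _ = x + ((m+1 : ℕ) : ℤ_[2]) + 2 * ∑ j ∈ Finset.range (m+1), Δ v (f^[j] x) := by
            push_cast; ring

omit hf in
lemma residue_sum (k : ℕ) :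
    (2^k : ℤ_[2]) ∣ ∑ b : ZMod (2^k), Δ v ((b.val : ℕ) : ℤ_[2]) := by
  have e : Function.Bijective (fun i : Fin (2^k) => ((i : ℕ) : ZMod (2^k))) := by
    rw [Fintype.bijective_iff_injective_and_card]
    constructor
    · intro i j hij
      simp only at hij
      have h := congrArg ZMod.val hij
      rw [ZMod.val_natCast_of_lt i.isLt, ZMod.val_natCast_of_lt j.isLt] at h
      exact Fin.ext h
    · simp [ZMod.card]
  have h1 : ∑ i : Fin (2^k), Δ v (((((i:ℕ) : ZMod (2^k))).val : ℕ) : ℤ_[2])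
      = ∑ b : ZMod (2^k), Δ v ((b.val : ℕ) : ℤ_[2]) :=
    Fintype.sum_bijective _ e _ _ (fun i => rfl)
  have h2 : ∀ i : Fin (2^k), Δ v (((((i:ℕ) : ZMod (2^k))).val : ℕ) : ℤ_[2])
      = Δ v ((i : ℕ) : ℤ_[2]) := by
    intro i; rw [ZMod.val_natCast_of_lt i.isLt]
  rw [← h1]
  rw [Fintype.sum_congr _ _ h2]
  rw [Fin.sum_univ_eq_sum_range (fun i => Δ v ((i:ℕ):ℤ_[2]))]
  have h3 : ∑ i ∈ Finset.range (2^k), Δ v ((i:ℕ):ℤ_[2])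
      = v (((2^k : ℕ) : ℤ_[2])) - v ((0:ℕ):ℤ_[2]) := by
    rw [← Finset.sum_range_sub (fun i => v ((i:ℕ):ℤ_[2])) (2^k)]
    apply Finset.sum_congr rfl
    intro i _
    unfold Δ
    push_cast
    ring_nf
  rw [h3]
  have : (2^k : ℤ_[2]) ∣ (((2^k : ℕ):ℤ_[2]) - ((0:ℕ):ℤ_[2])) := by push_cast; simp
  simpa using compat_dvd hv this


/-- induced map mod 2^k for any compatible f -/
noncomputable def gmap (f : ℤ_[2] → ℤ_[2]) (k : ℕ) (a : ZMod (2^k)) : ZMod (2^k) :=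
  ψ k (f ((a.val : ℕ) : ℤ_[2]))

omit hv hf in
lemma gmap_spec {f : ℤ_[2] → ℤ_[2]} (hfc : IsCompatible f) (k : ℕ) (x : ℤ_[2]) :
    gmap f k (ψ k x) = ψ k (f x) := by
  unfold gmap
  apply psi_eq_iff.mpr
  apply compat_dvd hfc
  have := dvd_lift (k := k) x
  rw [← psi_eq_iff] at this ⊢
  rw [← this]

omit hv hf in
lemma gmap_iter {f : ℤ_[2] → ℤ_[2]} (hfc : IsCompatible f) (k m : ℕ) (x : ℤ_[2]) :
    (gmap f k)^[m] (ψ k x) = ψ k (f^[m] x) := by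
  induction m with
  | zero => simp
  | succ m ih =>
      rw [Function.iterate_succ_apply', Function.iterate_succ_apply', ih, gmap_spec hfc]

/-- the crucial orbit-sum lemma -/
lemma orbit_sum (k : ℕ) (x : ℤ_[2]) :
    (2^k : ℤ_[2]) ∣ ∑ j ∈ Finset.range (2^k), Δ v (f^[j] x) →
    (2^(k+1) : ℤ_[2]) ∣ f^[2^k] x - (x + 2^k) := by
  intro hS
  have ht := telescope v hv hf (2^k) x
  have : f^[2^k] x - (x + 2^k) = 2 * ∑ j ∈ Finset.range (2^k), Δ v (f^[j] x) := by
    rw [ht]; push_cast; ring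
  rw [this, pow_succ, mul_comm ((2:ℤ_[2])^k) 2]
  exact mul_dvd_mul_left 2 hS

/-- Main induction: orbit covers all residues mod 2^k. -/
lemma orbit_covers : ∀ k : ℕ, ∀ x : ℤ_[2], ∀ a : ZMod (2^k), ∃ j : ℕ, ψ k (f^[j] x) = a := by
  have hfc : IsCompatible f := f_compat v hv hf
  intro k
  induction k with
  | zero =>
      intro x a
      refine ⟨0, ?_⟩
      have h : ∀ c d : ZMod (2^0), c = d := by decide
      exact h _ _
  | succ k ih =>
      -- first: the key congruence K k
      have hK : ∀ y : ℤ_[2], (2^(k+1) : ℤ_[2]) ∣ f^[2^k] y - (y + 2^k) := by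
        intro y
        apply orbit_sum v hv hf k y
        -- sum over orbit ≡ sum over residues
        have hsurj : ∀ b : ZMod (2^k), ∃ m : ℕ, (gmap f k)^[m] (ψ k y) = b := by
          intro b
          obtain ⟨j, hj⟩ := ih y b
          exact ⟨j, by rw [gmap_iter hfc]; exact hj⟩
        have hb := orbit_bij (gmap f k) (ψ k y) hsurj
        have hcard : Fintype.card (ZMod (2^k)) = 2^k := ZMod.card _
        -- sum over residues of lifted Δ
        have hres := residue_sum v hv k
        -- reindex
        have h1 : ∑ j : Fin (Fintype.card (ZMod (2^k))),
            Δ v ((((gmap f k)^[(j:ℕ)] (ψ k y)).val : ℕ) : ℤ_[2])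
            = ∑ b : ZMod (2^k), Δ v ((b.val : ℕ) : ℤ_[2]) :=
          Fintype.sum_bijective _ hb _ _ (fun j => rfl)
        have h2 : ∑ j : Fin (Fintype.card (ZMod (2^k))),
            Δ v ((((gmap f k)^[(j:ℕ)] (ψ k y)).val : ℕ) : ℤ_[2])
            = ∑ j ∈ Finset.range (2^k), Δ v (((ψ k (f^[j] y)).val : ℕ) : ℤ_[2]) := by
          rw [Fin.sum_univ_eq_sum_range
            (fun j => Δ v ((((gmap f k)^[j] (ψ k y)).val : ℕ) : ℤ_[2])) _, hcard]
          apply Finset.sum_congr rfl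
          intro j _
          rw [gmap_iter hfc]
        have h3 : (2^k : ℤ_[2]) ∣ ∑ j ∈ Finset.range (2^k),
            Δ v (((ψ k (f^[j] y)).val : ℕ) : ℤ_[2]) := by
          rw [← h2, h1]; exact hres
        -- termwise comparison
        have h4 : (2^k : ℤ_[2]) ∣ ∑ j ∈ Finset.range (2^k),
            (Δ v (f^[j] y) - Δ v (((ψ k (f^[j] y)).val : ℕ) : ℤ_[2])) := by
          apply Finset.dvd_sum
          intro j _
          exact delta_dvd v hv (dvd_lift _)
        have h5 : ∑ j ∈ Finset.range (2^k), Δ v (f^[j] y)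
            = (∑ j ∈ Finset.range (2^k),
                (Δ v (f^[j] y) - Δ v (((ψ k (f^[j] y)).val : ℕ) : ℤ_[2])))
              + ∑ j ∈ Finset.range (2^k), Δ v (((ψ k (f^[j] y)).val : ℕ) : ℤ_[2]) := by
          rw [← Finset.sum_add_distrib]
          apply Finset.sum_congr rfl
          intro j _
          ring
        rw [h5]
        exact dvd_add h4 h3
      -- now O (k+1)
      intro x a
      set b : ℤ_[2] := ((a.val : ℕ) : ℤ_[2]) with hbdef
      have hba : ψ (k+1) b = a := psi_lift a
      -- reduce a mod 2^k : ψ k b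
      obtain ⟨j, hj⟩ := ih x (ψ k b)
      have hjd : (2^k : ℤ_[2]) ∣ f^[j] x - b := psi_eq_iff.mp hj
      by_cases hcase : (2^(k+1) : ℤ_[2]) ∣ f^[j] x - b
      · exact ⟨j, by rw [← hba]; exact psi_eq_iff.mpr hcase⟩
      · refine ⟨2^k + j, ?_⟩
        rw [← hba]
        apply psi_eq_iff.mpr
        rw [Function.iterate_add_apply]
        set y : ℤ_[2] := f^[j] x with hy
        obtain ⟨u, hu⟩ := hjd
        have hu2 : ¬ (2:ℤ_[2]) ∣ u := by
          intro ⟨c, hc⟩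
          apply hcase
          rw [hu, hc]
          exact ⟨c, by ring⟩
        have hodd := odd_succ hu2
        obtain ⟨c, hc⟩ := hodd
        have heq : f^[2^k] y - b = (f^[2^k] y - (y + 2^k)) + 2^(k+1) * c := by
          calc f^[2^k] y - b = (f^[2^k] y - (y + 2^k)) + ((y - b) + 2^k) := by ring
            _ = (f^[2^k] y - (y + 2^k)) + 2^k * (u+1) := by rw [hu]; ring
            _ = (f^[2^k] y - (y + 2^k)) + 2^(k+1)*c := by rw [hc]; ring
        rw [heq]
        exact dvd_add (hK y) ⟨c, rfl⟩

/-- Backward direction conclusion -/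
lemma transitive_all (k : ℕ) : TransitiveMod f k := by
  have hfc : IsCompatible f := f_compat v hv hf
  refine ⟨gmap f k, fun x => (gmap_spec hfc k x), ?_⟩
  intro a b
  obtain ⟨j, hj⟩ := orbit_covers v hv hf k ((a.val : ℕ) : ℤ_[2]) b
  refine ⟨j, ?_⟩
  have : a = ψ k ((a.val : ℕ) : ℤ_[2]) := (psi_lift a).symm
  rw [this, gmap_iter hfc, ← hj]

end Backward

lemma hg_iter {f : ℤ_[2] → ℤ_[2]} {k : ℕ} {g : ZMod (2^k) → ZMod (2^k)}
    (hg : ∀ x : ℤ_[2], g (ψ k x) = ψ k (f x)) (m : ℕ) (x : ℤ_[2]) :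
    g^[m] (ψ k x) = ψ k (f^[m] x) := by
  induction m with
  | zero => simp
  | succ m ih => rw [Function.iterate_succ_apply', Function.iterate_succ_apply', ih, hg]

section Forward
variable {f : ℤ_[2] → ℤ_[2]} (hfc : IsCompatible f)
  (htr : ∀ k : ℕ, 1 ≤ k → TransitiveMod f k)

include hfc htr

omit hfc in
lemma mod_two (htr : ∀ k : ℕ, 1 ≤ k → TransitiveMod f k) (x : ℤ_[2]) :
    (2 : ℤ_[2]) ∣ f x - (x + 1) := by
  obtain ⟨g, hg, htrans⟩ := htr 1 le_rfl
  have h01 : (0 : ZMod (2^1)) ≠ 1 := by decide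
  have hgc : ∀ c : ZMod (2^1), g c = c + 1 := by
    have hg0 : g 0 = 1 := by
      rcases zmod2_cases (g 0) with h | h
      · exfalso
        have hall : ∀ m, g^[m] (0 : ZMod (2^1)) = 0 := by
          intro m
          induction m with
          | zero => simp
          | succ m ih => rw [Function.iterate_succ_apply', ih]; exact h
        obtain ⟨m, hm⟩ := htrans 0 1
        exact h01 (by rw [← hall m, hm])
      · exact h
    have hg1 : g 1 = 0 := by
      rcases zmod2_cases (g 1) with h | h
      · exact h
      · exfalso
        have hall : ∀ m, g^[m] (1 : ZMod (2^1)) = 1 := by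
          intro m
          induction m with
          | zero => simp
          | succ m ih => rw [Function.iterate_succ_apply', ih]; exact h
        obtain ⟨m, hm⟩ := htrans 1 0
        have h10 : (1 : ZMod (2^1)) = 0 := by rw [← hm, hall m]
        exact h01 h10.symm
    intro c
    rcases zmod2_cases c with h | h <;> subst h <;> simp [hg0, hg1] <;> decide
  have h2 : ψ 1 (f x) = ψ 1 (x + 1) := by
    rw [← hg x, hgc (ψ 1 x), map_add, map_one]
  have := psi_eq_iff.mp h2
  simpa using this

omit hfc htr in
lemma f_inj_mod {k : ℕ} (hk : 1 ≤ k) (htrk : TransitiveMod f k) {x y : ℤ_[2]}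
    (h : (2^k : ℤ_[2]) ∣ f x - f y) : (2^k : ℤ_[2]) ∣ x - y := by
  obtain ⟨g, hg, htrans⟩ := htrk
  haveI : Fact (1 < 2^k) := ⟨by
    calc 1 < 2^1 := by norm_num
    _ ≤ 2^k := Nat.pow_le_pow_right (by norm_num) hk⟩
  have hgsurj : Function.Surjective g := by
    intro b
    obtain ⟨m, hm⟩ := htrans (b + 1) b
    have hm0 : m ≠ 0 := by
      intro h0
      rw [h0] at hm
      simp at hm
    obtain ⟨m', rfl⟩ := Nat.exists_eq_succ_of_ne_zero hm0
    exact ⟨g^[m'] (b+1), by rw [← Function.iterate_succ_apply' g m' (b+1)]; exact hm⟩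
  have hginj : Function.Injective g := Finite.injective_iff_surjective.mpr hgsurj
  apply psi_eq_iff.mp
  apply hginj
  rw [hg, hg]
  exact psi_eq_iff.mpr h

lemma strong_lip {k : ℕ} {x y : ℤ_[2]} (h : (2^k : ℤ_[2]) ∣ x - y) :
    (2^(k+1) : ℤ_[2]) ∣ (f x - f y) - (x - y) := by
  by_cases hc : (2^(k+1) : ℤ_[2]) ∣ x - y
  · exact dvd_sub (compat_dvd hfc hc) hc
  · have he : (2^k : ℤ_[2]) ∣ f x - f y := compat_dvd hfc h
    have hne : ¬ (2^(k+1) : ℤ_[2]) ∣ f x - f y := by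
      intro hcon
      exact hc (f_inj_mod (Nat.le_add_left 1 k) (htr (k+1) (Nat.le_add_left 1 k)) hcon)
    obtain ⟨u, hu⟩ := h
    obtain ⟨u', hu'⟩ := he
    have hou : ¬ (2:ℤ_[2]) ∣ u := by
      intro ⟨c, hc'⟩; exact hc ⟨c, by rw [hu, hc']; ring⟩
    have hou' : ¬ (2:ℤ_[2]) ∣ u' := by
      intro ⟨c, hc'⟩; exact hne ⟨c, by rw [hu', hc']; ring⟩
    obtain ⟨c, hcc⟩ := odd_succ hou
    obtain ⟨c', hcc'⟩ := odd_succ hou'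
    have : (f x - f y) - (x - y) = 2^(k+1) * (c' - c) := by
      rw [hu, hu']
      have h1 : u' = 2*c' - 1 := by linear_combination hcc'
      have h2 : u = 2*c - 1 := by linear_combination hcc
      rw [h1, h2]; ring
    exact ⟨c' - c, this⟩


variable {w : ℤ_[2] → ℤ_[2]} (hww : ∀ x : ℤ_[2], f x = x + 1 + 2 * w x)

include hww

lemma w_lip {k : ℕ} {x y : ℤ_[2]}
    (h : (2^k : ℤ_[2]) ∣ x - y) : (2^k : ℤ_[2]) ∣ w x - w y := by
  have hs := strong_lip hfc htr h
  have h2 : (f x - f y) - (x - y) = 2 * (w x - w y) := by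
    rw [hww x, hww y]; ring
  rw [h2, pow_succ, mul_comm ((2:ℤ_[2])^k) 2] at hs
  exact (mul_dvd_mul_iff_left (by norm_num : (2:ℤ_[2]) ≠ 0)).mp hs

omit hfc htr in
lemma telescope_w (m : ℕ) (x : ℤ_[2]) :
    f^[m] x = x + (m : ℤ_[2]) + 2 * ∑ j ∈ Finset.range m, w (f^[j] x) := by
  induction m with
  | zero => simp
  | succ m ih =>
      calc f^[m+1] x = f (f^[m] x) := Function.iterate_succ_apply' f m x
        _ = f^[m] x + 1 + 2 * w (f^[m] x) := hww (f^[m] x)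
        _ = x + ((m:ℤ_[2]) + 1) + 2 * ∑ j ∈ Finset.range (m+1), w (f^[j] x) := by
            rw [Finset.sum_range_succ, ih]; ring
        _ = x + ((m+1 : ℕ) : ℤ_[2]) + 2 * ∑ j ∈ Finset.range (m+1), w (f^[j] x) := by
            push_cast; ring

omit hfc htr hww in
lemma trans_surj {n : ℕ} [Fact (1 < n)] {g : ZMod n → ZMod n}
    (htrans : ∀ a b : ZMod n, ∃ m : ℕ, g^[m] a = b) : Function.Surjective g := by
  intro b
  obtain ⟨m, hm⟩ := htrans (b + 1) b
  have hm0 : m ≠ 0 := by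
    intro h0
    rw [h0] at hm
    simp at hm
  obtain ⟨m', rfl⟩ := Nat.exists_eq_succ_of_ne_zero hm0
  exact ⟨g^[m'] (b+1), by rw [← Function.iterate_succ_apply' g m' (b+1)]; exact hm⟩

omit hfc hww in
lemma f_cycle (k : ℕ) (x : ℤ_[2]) :
    (2^k : ℤ_[2]) ∣ f^[2^k] x - x := by
  rcases Nat.eq_zero_or_pos k with rfl | hk
  · rw [pow_zero]; exact one_dvd _
  obtain ⟨g, hg, htrans⟩ := htr k hk
  haveI : Fact (1 < 2^k) := ⟨by
    calc 1 < 2^1 := by norm_num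
    _ ≤ 2^k := Nat.pow_le_pow_right (by norm_num) hk⟩
  have hgsurj := trans_surj htrans
  have hginj : Function.Injective g := Finite.injective_iff_surjective.mpr hgsurj
  have hclose := orbit_closes g (ψ k x) (htrans (ψ k x)) hginj
  rw [ZMod.card] at hclose
  rw [hg_iter hg] at hclose
  exact psi_eq_iff.mp hclose

omit hfc hww in
lemma f_nofix (k : ℕ) (x : ℤ_[2]) :
    ¬ (2^(k+1) : ℤ_[2]) ∣ f^[2^k] x - x := by
  intro hdvd
  obtain ⟨g, hg, htrans⟩ := htr (k+1) (Nat.le_add_left 1 k)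
  have hfix : g^[2^k] (ψ (k+1) x) = ψ (k+1) x := by
    rw [hg_iter hg]
    exact psi_eq_iff.mpr hdvd
  set a := ψ (k+1) x with ha
  have hsurj2 : Function.Surjective (fun r : Fin (2^k) => g^[(r:ℕ)] a) := by
    intro b
    obtain ⟨m, hm⟩ := htrans a b
    refine ⟨⟨m % 2^k, Nat.mod_lt _ (by positivity)⟩, ?_⟩
    simp only
    rw [← iterate_period g a (by positivity) hfix m]
    exact hm
  have hcard := Fintype.card_le_of_surjective _ hsurj2
  rw [ZMod.card] at hcard
  simp only [Fintype.card_fin] at hcard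
  exact absurd hcard (by
    have : (2:ℕ)^k < 2^(k+1) := Nat.pow_lt_pow_right (by norm_num) (Nat.lt_succ_self k)
    omega)

omit hfc hww in
lemma f_K (k : ℕ) (x : ℤ_[2]) :
    (2^(k+1) : ℤ_[2]) ∣ f^[2^k] x - (x + 2^k) := by
  obtain ⟨u, hu⟩ := f_cycle htr k x
  have hou : ¬ (2:ℤ_[2]) ∣ u := by
    intro ⟨c, hc⟩
    exact f_nofix htr k x ⟨c, by rw [hu, hc]; ring⟩
  obtain ⟨c, hc⟩ := odd_succ hou
  refine ⟨c - 1, ?_⟩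
  have : f^[2^k] x - (x + 2^k) = (f^[2^k] x - x) - 2^k := by ring
  rw [this, hu]
  have hu1 : u = 2*c - 1 := by linear_combination hc
  rw [hu1]; ring

omit hfc in
lemma orbit_sum_w (k : ℕ) (x : ℤ_[2]) :
    (2^k : ℤ_[2]) ∣ ∑ j ∈ Finset.range (2^k), w (f^[j] x) := by
  have ht := telescope_w hww (2^k) x
  have h2 : 2 * ∑ j ∈ Finset.range (2^k), w (f^[j] x) = f^[2^k] x - (x + 2^k) := by
    rw [ht]; push_cast; ring
  have := f_K htr k x
  rw [← h2, pow_succ, mul_comm ((2:ℤ_[2])^k) 2] at this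
  exact (mul_dvd_mul_iff_left (by norm_num : (2:ℤ_[2]) ≠ 0)).mp this

omit hfc htr hww in
lemma sum_vs_residues (h : ℤ_[2] → ℤ_[2])
    (hlip : ∀ (k : ℕ) (x y : ℤ_[2]), (2^k : ℤ_[2]) ∣ x - y → (2^k : ℤ_[2]) ∣ h x - h y)
    (k : ℕ) (s : ℕ → ℤ_[2])
    (hsurj : ∀ b : ZMod (2^k), ∃ m' : ℕ, m' < 2^k ∧ ψ k (s m') = b) :
    (2^k : ℤ_[2]) ∣ (∑ j ∈ Finset.range (2^k), h (s j))
      - ∑ b : ZMod (2^k), h ((b.val : ℕ) : ℤ_[2]) := by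
  have hbij : Function.Bijective (fun j : Fin (2^k) => ψ k (s (j : ℕ))) := by
    rw [Fintype.bijective_iff_surjective_and_card]
    refine ⟨?_, by simp [ZMod.card]⟩
    intro b
    obtain ⟨m', hm', he⟩ := hsurj b
    exact ⟨⟨m', hm'⟩, he⟩
  have h1 : ∑ j : Fin (2^k), h (((ψ k (s (j:ℕ))).val : ℕ) : ℤ_[2])
      = ∑ b : ZMod (2^k), h ((b.val : ℕ) : ℤ_[2]) :=
    Fintype.sum_bijective _ hbij _ _ (fun j => rfl)
  have h2 : ∑ j : Fin (2^k), h (((ψ k (s (j:ℕ))).val : ℕ) : ℤ_[2])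
      = ∑ j ∈ Finset.range (2^k), h (((ψ k (s j)).val : ℕ) : ℤ_[2]) :=
    Fin.sum_univ_eq_sum_range (fun j => h (((ψ k (s j)).val : ℕ) : ℤ_[2])) (2^k)
  rw [← h1, h2]
  have h3 : ∑ j ∈ Finset.range (2^k), h (s j)
      - ∑ j ∈ Finset.range (2^k), h (((ψ k (s j)).val : ℕ) : ℤ_[2])
      = ∑ j ∈ Finset.range (2^k), (h (s j) - h (((ψ k (s j)).val : ℕ) : ℤ_[2])) := by
    rw [Finset.sum_sub_distrib]
  rw [h3]
  apply Finset.dvd_sum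
  intro j _
  exact hlip k _ _ (dvd_lift (s j))

lemma block_sum (k : ℕ) (a : ℕ) :
    (2^k : ℤ_[2]) ∣ ∑ i ∈ Finset.range (2^k), w (((a + i : ℕ)) : ℤ_[2]) := by
  rcases Nat.eq_zero_or_pos k with rfl | hk
  · simp
  haveI : NeZero ((2:ℕ)^k) := ⟨by positivity⟩
  -- residue sum is divisible
  have hres : (2^k : ℤ_[2]) ∣ ∑ b : ZMod (2^k), w ((b.val : ℕ) : ℤ_[2]) := by
    obtain ⟨g, hg, htrans⟩ := htr k hk
    haveI : Fact (1 < 2^k) := ⟨by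
      calc 1 < 2^1 := by norm_num
      _ ≤ 2^k := Nat.pow_le_pow_right (by norm_num) hk⟩
    have hgsurj := trans_surj htrans
    have hginj : Function.Injective g := Finite.injective_iff_surjective.mpr hgsurj
    have hclose := orbit_closes g (ψ k 0) (htrans (ψ k 0)) hginj
    rw [ZMod.card] at hclose
    have hsurj : ∀ b : ZMod (2^k), ∃ m' : ℕ, m' < 2^k ∧ ψ k (f^[m'] 0) = b := by
      intro b
      obtain ⟨m, hm⟩ := htrans (ψ k 0) b
      refine ⟨m % 2^k, Nat.mod_lt _ (by positivity), ?_⟩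
      rw [← hg_iter hg, ← iterate_period g (ψ k 0) (by positivity) hclose m]
      exact hm
    have hdvd := sum_vs_residues w (fun k x y hd => w_lip hfc htr hww hd) k
      (fun j => f^[j] 0) hsurj
    have horb := orbit_sum_w htr hww k 0
    have := dvd_sub horb hdvd
    simpa using this
  have hsurj2 : ∀ b : ZMod (2^k), ∃ m' : ℕ, m' < 2^k ∧ ψ k (((a + m' : ℕ) : ℤ_[2])) = b := by
    intro b
    refine ⟨(b - (a : ZMod (2^k))).val, ZMod.val_lt _, ?_⟩
    rw [psi_natCast]
    push_cast
    rw [ZMod.natCast_val, ZMod.cast_id]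
    ring
  have hdvd := sum_vs_residues w (fun k x y hd => w_lip hfc htr hww hd) k
    (fun i => ((a + i : ℕ) : ℤ_[2])) hsurj2
  have := dvd_add hdvd hres
  simpa using this


noncomputable def Psum (w : ℤ_[2] → ℤ_[2]) (n : ℕ) : ℤ_[2] :=
  ∑ i ∈ Finset.range n, w ((i : ℕ) : ℤ_[2])

lemma Psum_one_block (n k : ℕ) :
    (2^k : ℤ_[2]) ∣ Psum w (n + 2^k) - Psum w n := by
  have h1 : Psum w (n + 2^k) - Psum w n = ∑ i ∈ Finset.Ico n (n + 2^k), w ((i:ℕ):ℤ_[2]) := by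
    rw [Finset.sum_Ico_eq_sub _ (Nat.le_add_right n (2^k))]
    rfl
  rw [h1, Finset.sum_Ico_eq_sum_range]
  simp only [Nat.add_sub_cancel_left]
  exact block_sum hfc htr hww k n

lemma Psum_blocks (n t k : ℕ) :
    (2^k : ℤ_[2]) ∣ Psum w (n + t * 2^k) - Psum w n := by
  induction t with
  | zero => simp
  | succ t ih =>
      have : n + (t+1) * 2^k = (n + t * 2^k) + 2^k := by ring
      rw [this]
      have h2 := Psum_one_block hfc htr hww (n + t * 2^k) k
      have : Psum w ((n + t * 2^k) + 2^k) - Psum w n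
          = (Psum w ((n + t * 2^k) + 2^k) - Psum w (n + t * 2^k))
            + (Psum w (n + t * 2^k) - Psum w n) := by ring
      rw [this]
      exact dvd_add h2 ih

omit hfc htr hww in
lemma dvd_of_tendsto {c L : ℤ_[2]} {s : ℕ → ℤ_[2]} {m : ℕ}
    (h : Filter.Tendsto s Filter.atTop (nhds L))
    (hd : ∀ᶠ k in Filter.atTop, (2^m : ℤ_[2]) ∣ s k - c) : (2^m : ℤ_[2]) ∣ L - c := by
  have hclosed : IsClosed {z : ℤ_[2] | ‖z - c‖ ≤ (2:ℝ)^(-(m:ℤ))} := by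
    have hcont : Continuous fun z : ℤ_[2] => ‖z - c‖ :=
      (continuous_id.sub continuous_const).norm
    exact isClosed_le hcont continuous_const
  have hmem : L ∈ {z : ℤ_[2] | ‖z - c‖ ≤ (2:ℝ)^(-(m:ℤ))} := by
    apply hclosed.mem_of_tendsto h
    filter_upwards [hd] with k hk
    exact (norm_le_iff_dvd _).mpr hk
  exact (norm_le_iff_dvd _).mp hmem

/-- the value sequence -/
noncomputable def useq (w : ℤ_[2] → ℤ_[2]) (x : ℤ_[2]) (k : ℕ) : ℤ_[2] :=
  Psum w ((ψ k x).val)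

omit hfc htr hww in
lemma nval_lt (k : ℕ) (x : ℤ_[2]) : (ψ k x).val < 2^k := by
  haveI : NeZero ((2:ℕ)^k) := ⟨by positivity⟩
  exact ZMod.val_lt _

omit hfc htr hww in
lemma nval_dvd (k : ℕ) (x : ℤ_[2]) : (2^k : ℤ_[2]) ∣ x - (((ψ k x).val : ℕ) : ℤ_[2]) :=
  dvd_lift x

omit hfc htr hww in
lemma nval_mod {k l : ℕ} (hkl : k ≤ l) (x : ℤ_[2]) :
    (ψ k x).val = (ψ l x).val % 2^k := by
  haveI : NeZero ((2:ℕ)^k) := ⟨by positivity⟩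
  have h1 : (2^k : ℤ_[2]) ∣ x - (((ψ l x).val : ℕ) : ℤ_[2]) := by
    have := nval_dvd l x
    exact dvd_trans (pow_dvd_pow (2:ℤ_[2]) hkl) this
  have h2 : ψ k x = (((ψ l x).val : ℕ) : ZMod (2^k)) := by
    have := psi_eq_iff.mpr h1
    rw [psi_natCast] at this
    exact this
  rw [h2, ZMod.val_natCast]

/-- congruence of u along k -/
lemma useq_congr {k l : ℕ} (hkl : k ≤ l) (x : ℤ_[2]) :
    (2^k : ℤ_[2]) ∣ useq w x l - useq w x k := by
  have hmod := nval_mod hkl x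
  set nk := (ψ k x).val
  set nl := (ψ l x).val
  have hle : nk ≤ nl := by rw [hmod]; exact Nat.mod_le _ _
  have : nl = nk + (nl / 2^k) * 2^k := by
    rw [hmod, Nat.mul_comm]
    exact (Nat.mod_add_div nl (2^k)).symm
  rw [show useq w x l = Psum w nl from rfl, show useq w x k = Psum w nk from rfl, this]
  exact Psum_blocks hfc htr hww nk (nl / 2^k) k

/-- Cauchy -/
lemma useq_cauchy (x : ℤ_[2]) : CauchySeq (useq w x) := by
  apply cauchySeq_of_le_geometric (1/2 : ℝ) 1 (by norm_num)
  intro n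
  rw [dist_eq_norm]
  have h := useq_congr hfc htr hww (Nat.le_succ n) x
  have := (norm_le_iff_dvd (useq w x (n+1) - useq w x n)).mpr h
  calc ‖useq w x n - useq w x (n+1)‖ = ‖useq w x (n+1) - useq w x n‖ := by
        rw [← norm_neg]; congr 1; ring
    _ ≤ (2:ℝ)^(-(n:ℤ)) := this
    _ ≤ 1 * (1/2)^n := by
        rw [one_mul, zpow_neg, zpow_natCast, div_pow, one_pow]
        exact le_of_eq (by norm_num)

lemma Psum_congr_nat {m : ℕ} {a b : ℕ} (hab : a % 2^m = b % 2^m) :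
    (2^m : ℤ_[2]) ∣ Psum w a - Psum w b := by
  have haux : ∀ a b : ℕ, b ≤ a → a % 2^m = b % 2^m →
      (2^m : ℤ_[2]) ∣ Psum w a - Psum w b := by
    intro a b hle hab
    obtain ⟨t, ht⟩ := (Nat.modEq_iff_dvd' hle).mp (Nat.ModEq.symm hab)
    have ha : a = b + t * 2^m := by
      rw [Nat.mul_comm] at ht
      omega
    rw [ha]
    exact Psum_blocks hfc htr hww b t m
  rcases le_total b a with h | h
  · exact haux a b h hab
  · have := haux b a h hab.symm
    have h2 : Psum w a - Psum w b = -(Psum w b - Psum w a) := by ring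
    rw [h2]
    exact dvd_neg.mpr this

omit hfc htr hww in
lemma psi_val_cast (k : ℕ) (x : ℤ_[2]) : (((ψ k x).val : ℕ) : ZMod (2^k)) = ψ k x := by
  rw [← psi_natCast]; exact psi_lift _

/-- Final: forward direction -/
lemma forward_final :
    ∃ v : ℤ_[2] → ℤ_[2], IsCompatible v ∧
      ∀ x : ℤ_[2], f x = 1 + x + 2 * (v (x + 1) - v x) := by
  classical
  set v : ℤ_[2] → ℤ_[2] := fun x => Filter.limUnder Filter.atTop (useq w x) with hv
  have htend : ∀ x : ℤ_[2], Filter.Tendsto (useq w x) Filter.atTop (nhds (v x)) :=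
    fun x => (useq_cauchy hfc htr hww x).tendsto_limUnder
  have hvlip : ∀ (m : ℕ) (x y : ℤ_[2]), (2^m : ℤ_[2]) ∣ x - y →
      (2^m : ℤ_[2]) ∣ v x - v y := by
    intro m x y hxy
    have htt : Filter.Tendsto (fun k => useq w x k - useq w y k) Filter.atTop
        (nhds (v x - v y)) := (htend x).sub (htend y)
    have hev : ∀ᶠ k in Filter.atTop, (2^m : ℤ_[2]) ∣ (useq w x k - useq w y k) - 0 := by
      filter_upwards [Filter.eventually_ge_atTop m] with k hk
      rw [sub_zero]
      apply Psum_congr_nat hfc htr hww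
      rw [← nval_mod hk x, ← nval_mod hk y]
      congr 1
      exact psi_eq_iff.mpr hxy
    simpa using dvd_of_tendsto htt hev
  refine ⟨v, compat_of_dvd (fun m x y h => hvlip m x y h), ?_⟩
  intro x
  have hwx : v (x+1) - v x = w x := by
    apply eq_of_forall_dvd
    intro m
    have htt : Filter.Tendsto (fun k => useq w (x+1) k - useq w x k) Filter.atTop
        (nhds (v (x+1) - v x)) := (htend (x+1)).sub (htend x)
    apply dvd_of_tendsto htt
    filter_upwards [Filter.eventually_ge_atTop m] with k hk
    set n := (ψ k x).val with hn
    have hn1 : (ψ k (x+1)).val = (n + 1) % 2^k := by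
      have h1 : ψ k (x + 1) = ((n + 1 : ℕ) : ZMod (2^k)) := by
        rw [map_add, map_one]
        push_cast
        rw [psi_val_cast]
      rw [h1, ZMod.val_natCast]
    -- decompose
    have hd1 : (2^m : ℤ_[2]) ∣ Psum w ((n+1) % 2^k) - Psum w (n+1) := by
      apply dvd_trans (pow_dvd_pow (2:ℤ_[2]) hk)
      apply Psum_congr_nat hfc htr hww
      exact Nat.mod_mod_of_dvd _ dvd_rfl
    have hd2 : Psum w (n+1) - Psum w n = w ((n : ℕ) : ℤ_[2]) := by
      unfold Psum
      rw [Finset.sum_range_succ]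
      ring
    have hd3 : (2^m : ℤ_[2]) ∣ w ((n:ℕ):ℤ_[2]) - w x := by
      apply w_lip hfc htr hww
      have := nval_dvd k x
      have h4 : (2^m : ℤ_[2]) ∣ x - ((n:ℕ):ℤ_[2]) :=
        dvd_trans (pow_dvd_pow (2:ℤ_[2]) hk) this
      have h5 : ((n:ℕ):ℤ_[2]) - x = -(x - ((n:ℕ):ℤ_[2])) := by ring
      rw [h5]
      exact dvd_neg.mpr h4
    have hsplit : (useq w (x+1) k - useq w x k) - w x
        = (Psum w ((n+1) % 2^k) - Psum w (n+1))
          + (Psum w (n+1) - Psum w n - w ((n:ℕ):ℤ_[2]))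
          + (w ((n:ℕ):ℤ_[2]) - w x) := by
      rw [show useq w (x+1) k = Psum w ((ψ k (x+1)).val) from rfl, hn1,
        show useq w x k = Psum w n from rfl]
      ring
    rw [hsplit, hd2]
    simp only [sub_self, add_zero]
    exact dvd_add hd1 hd3
  rw [hww x, hwx]
  ring

end Forward

end S4

theorem stmt4 (f : ℤ_[2] → ℤ_[2]) :
    (IsCompatible f ∧ ∀ k : ℕ, 1 ≤ k → TransitiveMod f k) ↔
      ∃ v : ℤ_[2] → ℤ_[2], IsCompatible v ∧
        ∀ x : ℤ_[2], f x = 1 + x + 2 * (v (x + 1) - v x) := by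
  constructor
  · rintro ⟨hfc, htr⟩
    have hmod : ∀ x : ℤ_[2], ∃ c : ℤ_[2], f x - (x + 1) = 2 * c :=
      fun x => S4.mod_two htr htr x
    choose w hwspec using hmod
    have hww : ∀ x : ℤ_[2], f x = x + 1 + 2 * w x := fun x => by
      linear_combination hwspec x
    exact S4.forward_final hfc htr hww
  · rintro ⟨v, hv, hf⟩
    exact ⟨S4.f_compat v hv hf, fun k _ => S4.transitive_all v hv hf k⟩
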